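/- Let σ ∈ (0,1), γ ∈ (0,2), λ > 0, let A : H → Set H be β-strongly monotone (β > 0) and B : H → H be monotone, and let u* ∈ Ω. Suppose w, v ∈ H satisfy w − λB(w) ∈ v + λA(v) and λ‖B(w) − B(v)‖ ≤ σ‖w − v‖, set φ = (w − v) − λ(B(w) − B(v)), assume φ ≠ 0, and let δ = ⟨w − v, φ⟩/‖φ‖² and u⁺ = w − γδφ. Then ‖u⁺ − u*‖² ≤ ‖w − u*‖² − γ(2 − γ)·((1 − σ)²/(1 + σ)²)·‖w − v‖² − 2γλβ·((1 − σ)²/(1 + σ)²)·‖v − u*‖². -/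

import Mathlib

set_option maxHeartbeats 1000000


open RealInnerProductSpace

/-- One-step inequality under `β`-strong monotonicity of `A`:
`‖u⁺ - u*‖² ≤ ‖w - u*‖² - γ(2 - γ)((1 - σ)²/(1 + σ)²)‖w - v‖²
  - 2γλβ((1 - σ)²/(1 + σ)²)‖v - u*‖²`. -/
theorem contraction_step_strongly_monotone_inequality
    {H : Type*} [NormedAddCommGroup H] [InnerProductSpace ℝ H] [CompleteSpace H]
    (σ γ lam : ℝ) (hσ : σ ∈ Set.Ioo (0 : ℝ) 1) (hγ : γ ∈ Set.Ioo (0 : ℝ) 2) (hlam : 0 < lam)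
    (A : H → Set H) (B : H → H) (β : ℝ) (hβ : 0 < β)
    (hAsmono : ∀ u v : H, ∀ a ∈ A u, ∀ b ∈ A v, β * ‖u - v‖ ^ 2 ≤ ⟪a - b, u - v⟫)
    (hBmono : ∀ u v : H, 0 ≤ ⟪B u - B v, u - v⟫)
    (ustar : H) (hstar : -B ustar ∈ A ustar)
    (w v : H)
    (hfb : ∃ a ∈ A v, w - lam • B w = v + lam • a)
    (hls : lam * ‖B w - B v‖ ≤ σ * ‖w - v‖)
    (φ : H) (hφdef : φ = (w - v) - lam • (B w - B v)) (hφ : φ ≠ 0)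
    (δ : ℝ) (hδ : δ = ⟪w - v, φ⟫ / ‖φ‖ ^ 2)
    (uplus : H) (huplus : uplus = w - (γ * δ) • φ) :
    ‖uplus - ustar‖ ^ 2 ≤
      ‖w - ustar‖ ^ 2 - γ * (2 - γ) * ((1 - σ) ^ 2 / (1 + σ) ^ 2) * ‖w - v‖ ^ 2
        - 2 * γ * lam * β * ((1 - σ) ^ 2 / (1 + σ) ^ 2) * ‖v - ustar‖ ^ 2 := by
  obtain ⟨hσ0, hσ1⟩ := hσ
  obtain ⟨hγ0, hγ2⟩ := hγ
  obtain ⟨a, ha, heq⟩ := hfb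
  -- basic positivity
  have hφpos : (0:ℝ) < ‖φ‖ := norm_pos_iff.mpr hφ
  have hφP : (0:ℝ) < ‖φ‖ ^ 2 := by positivity
  have hwv : (0:ℝ) < ‖w - v‖ := by
    rcases eq_or_lt_of_le (norm_nonneg (w - v)) with h | h
    · exfalso
      have hwv0 : w - v = 0 := by
        have := norm_eq_zero.mp h.symm
        exact this
      have hB0 : lam * ‖B w - B v‖ ≤ 0 := by
        have := hls; rw [← h] at this; linarith
      have : ‖B w - B v‖ = 0 := by
        nlinarith [norm_nonneg (B w - B v)]
      have hB : B w - B v = 0 := norm_eq_zero.mp this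
      apply hφ
      rw [hφdef, hwv0, hB, smul_zero, sub_zero]
    · exact h
  -- φ = lam • (a + B v)
  have hφa : φ = lam • (a + B v) := by
    have h1 : lam • a = w - lam • B w - v := eq_sub_of_add_eq' heq.symm
    have h2 : lam • a = w - v - lam • B w := by rw [h1]; abel
    rw [hφdef, smul_add, h2, smul_sub]
    abel
  -- lower bound on ⟪w - v, φ⟫
  have hip : lam * ‖B w - B v‖ * ‖w - v‖ ≤ σ * ‖w - v‖ ^ 2 := by
    nlinarith
  have htlb : (1 - σ) * ‖w - v‖ ^ 2 ≤ ⟪w - v, φ⟫ := by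
    rw [hφdef, inner_sub_right, real_inner_smul_right, real_inner_self_eq_norm_sq]
    have := abs_real_inner_le_norm (w - v) (B w - B v)
    have h2 : ⟪w - v, B w - B v⟫ ≤ ‖w - v‖ * ‖B w - B v‖ :=
      le_trans (le_abs_self _) this
    nlinarith
  -- upper bound on ‖φ‖
  have hφub : ‖φ‖ ≤ (1 + σ) * ‖w - v‖ := by
    rw [hφdef]
    calc ‖(w - v) - lam • (B w - B v)‖ ≤ ‖w - v‖ + ‖lam • (B w - B v)‖ := norm_sub_le _ _
    _ ≤ (1 + σ) * ‖w - v‖ := by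
        rw [norm_smul, Real.norm_eq_abs, abs_of_pos hlam]; nlinarith
  have hφub2 : ‖φ‖ ^ 2 ≤ (1 + σ) ^ 2 * ‖w - v‖ ^ 2 := by
    nlinarith [norm_nonneg φ]
  -- strong monotonicity lower bound
  have hvu : lam * β * ‖v - ustar‖ ^ 2 ≤ ⟪v - ustar, φ⟫ := by
    rw [hφa, real_inner_smul_right, real_inner_comm]
    have h1 := hAsmono v ustar a ha (-B ustar) hstar
    have h2 := hBmono v ustar
    have : ⟪a + B v, v - ustar⟫ = ⟪a - -B ustar, v - ustar⟫ + ⟪B v - B ustar, v - ustar⟫ := by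
      rw [← inner_add_left]; congr 1; abel
    rw [this]
    nlinarith
  -- inner product with w - u*
  have hwu : ⟪w - v, φ⟫ + lam * β * ‖v - ustar‖ ^ 2 ≤ ⟪w - ustar, φ⟫ := by
    have : ⟪w - ustar, φ⟫ = ⟪w - v, φ⟫ + ⟪v - ustar, φ⟫ := by
      rw [← inner_add_left]; congr 1; abel
    rw [this]; linarith
  -- expansion
  have hexp : ‖uplus - ustar‖ ^ 2
      = ‖w - ustar‖ ^ 2 - 2 * (γ * δ) * ⟪w - ustar, φ⟫ + (γ * δ) ^ 2 * ‖φ‖ ^ 2 := by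
    have : uplus - ustar = (w - ustar) - (γ * δ) • φ := by rw [huplus]; abel
    rw [this, @norm_sub_sq_real, real_inner_smul_right, norm_smul, mul_pow,
      Real.norm_eq_abs, sq_abs]
    ring
  -- δ facts
  have hδP : δ * ‖φ‖ ^ 2 = ⟪w - v, φ⟫ := by
    rw [hδ, div_mul_cancel₀ _ (ne_of_gt hφP)]
  set c : ℝ := (1 - σ) ^ 2 / (1 + σ) ^ 2 with hc
  have hs : (0:ℝ) < (1 + σ) ^ 2 := pow_pos (by linarith) 2
  have hcpos : 0 < c := div_pos (pow_pos (by linarith) 2) hs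
  have hcs : c * (1 + σ) ^ 2 = (1 - σ) ^ 2 := div_mul_cancel₀ _ (ne_of_gt hs)
  have hcP : c * ‖φ‖ ^ 2 ≤ (1 - σ) ^ 2 * ‖w - v‖ ^ 2 := by
    nlinarith [hφub2, hcpos.le, hcs]
  have htnn : 0 < (1 - σ) * ‖w - v‖ ^ 2 := by nlinarith
  have hδc : c ≤ δ := by
    rw [hδ, le_div_iff₀ hφP]
    nlinarith
  have hδ0 : 0 < δ := lt_of_lt_of_le hcpos hδc
  have hδ2P : c * ‖w - v‖ ^ 2 ≤ δ ^ 2 * ‖φ‖ ^ 2 := by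
    have h1 : δ ^ 2 * ‖φ‖ ^ 2 = ⟪w - v, φ⟫ ^ 2 / ‖φ‖ ^ 2 := by
      rw [hδ]; field_simp
    rw [h1, le_div_iff₀ hφP]
    have ht2 : ((1 - σ) * ‖w - v‖ ^ 2) ^ 2 ≤ ⟪w - v, φ⟫ ^ 2 := by
      nlinarith
    nlinarith [hφub2, hcpos.le, hcs, sq_nonneg (‖w - v‖ ^ 2)]
  -- assemble
  rw [hexp]
  have hγδ : 0 < γ * δ := mul_pos hγ0 hδ0
  have hV : (0:ℝ) ≤ ‖v - ustar‖ ^ 2 := by positivity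
  have key : -2 * (γ * δ) * ⟪w - ustar, φ⟫
      ≤ -2 * (γ * δ) * (δ * ‖φ‖ ^ 2 + lam * β * ‖v - ustar‖ ^ 2) := by
    have h2 : δ * ‖φ‖ ^ 2 + lam * β * ‖v - ustar‖ ^ 2 ≤ ⟪w - ustar, φ⟫ := by
      rw [hδP]; exact hwu
    exact mul_le_mul_of_nonpos_left h2 (by nlinarith)
  have h1 := mul_le_mul_of_nonneg_left hδ2P (by nlinarith : (0:ℝ) ≤ γ * (2 - γ))
  have h2 := mul_le_mul_of_nonneg_left hδc
    (by positivity : (0:ℝ) ≤ 2 * γ * lam * β * ‖v - ustar‖ ^ 2)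
  have step : ‖w - ustar‖ ^ 2 - 2 * (γ * δ) * (δ * ‖φ‖ ^ 2 + lam * β * ‖v - ustar‖ ^ 2)
      + (γ * δ) ^ 2 * ‖φ‖ ^ 2
      = ‖w - ustar‖ ^ 2 - γ * (2 - γ) * (δ ^ 2 * ‖φ‖ ^ 2)
        - 2 * γ * lam * β * ‖v - ustar‖ ^ 2 * δ := by ring
  linarith [key, h1, h2, step]
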